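/- arXiv:1209.5223 — 4 statements merged into one kernel-verified Lean document; each statement's English description precedes it below -/
import Mathlib

section
/- Let Ω ⊂ ℝ^d (d = 2 or 3) be a bounded polygonal/polyhedral domain. Suppose: (i) there is a constant κ > 0 with κ‖η‖²_{0,Ω} ≤ ‖η·n‖²_{0,∂Ω} for all rigid motions η; (ii) the second Korn inequality holds on the orthogonal complement of rigid motions: |w|²_{1,Ω} ≤ C_K ‖ε(w)‖²_{0,Ω} whenever w ∈ H¹(Ω)^d is L²-orthogonal to RM(Ω); (iii) a trace inequality ‖w·n‖²_{0,∂Ω} ≤ C_T |w|²_{1,Ω} holds on the orthogonal complement of rigid motions; (iv) |r|²_{1,Ω} ≤ C_P ‖r‖²_{0,Ω} for r ∈ RM(Ω). Then there exists C_{Kn} > 0 such that |v|²_{1,Ω} ≤ C_{Kn} ‖ε(v)‖²_{0,Ω} for all v ∈ H¹(Ω)^d satisfying v·n = 0 on ∂Ω. -/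
open RealInnerProductSpace

/-- Korn inequality on `H¹_{0,n}(Ω)`: from (i) the rigid-motion boundary bound,
(ii) the second Korn inequality on the orthogonal complement of rigid motions,
(iii) a trace inequality there, and (iv) the finite-dimensional bound on rigid
motions, one obtains `|v|²_{1,Ω} ≤ C_{Kn} ‖ε(v)‖²_{0,Ω}` for all `v` with
`v·n = 0` on `∂Ω`.  Here `H` is `H¹(Ω)^d` with the `L²` inner product, `s1` is
the `H¹` seminorm, `E v = ‖ε(v)‖`, and `T` is the normal trace `v ↦ v·n|_{∂Ω}`. -/
theorem stmt_3 {H Y : Type*} [NormedAddCommGroup H] [InnerProductSpace ℝ H]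
    [NormedAddCommGroup Y] [NormedSpace ℝ Y]
    (RM : Submodule ℝ H) [FiniteDimensional ℝ RM]
    (s1 E : Seminorm ℝ H) (T : H →ₗ[ℝ] Y)
    (κ CK CT CP : ℝ) (hκ : 0 < κ) (hCK : 0 < CK) (hCT : 0 < CT) (hCP : 0 < CP)
    (hE0 : ∀ r ∈ RM, E r = 0)
    (hbdry : ∀ η ∈ RM, κ * ‖η‖ ^ 2 ≤ ‖T η‖ ^ 2)
    (hkorn2 : ∀ w : H, (∀ η ∈ RM, ⟪w, η⟫ = 0) → (s1 w) ^ 2 ≤ CK * (E w) ^ 2)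
    (htrace : ∀ w : H, (∀ η ∈ RM, ⟪w, η⟫ = 0) → ‖T w‖ ^ 2 ≤ CT * (s1 w) ^ 2)
    (hfd : ∀ r ∈ RM, (s1 r) ^ 2 ≤ CP * ‖r‖ ^ 2) :
    ∃ CKn > 0, ∀ v : H, T v = 0 → (s1 v) ^ 2 ≤ CKn * (E v) ^ 2 := by
  refine ⟨2 * CK + 2 * CP * (CT * CK / κ), by positivity, fun v hv => ?_⟩
  set r : H := (RM.starProjection v : H) with hr
  have hrRM : r ∈ RM := RM.starProjection_apply_mem v
  set w : H := v - r with hw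
  have hwperp : ∀ η ∈ RM, ⟪w, η⟫ = 0 := by
    intro η hη
    have h := Submodule.sub_starProjection_mem_orthogonal v (K := RM)
    rw [real_inner_comm]
    exact (Submodule.mem_orthogonal RM _).mp h η hη
  have hEr : E r = 0 := hE0 r hrRM
  have hEw : E w ≤ E v := by
    have := map_sub_le_add E v r
    simpa [hEr] using this
  have hEw2 : (E w) ^ 2 ≤ (E v) ^ 2 := by
    have h0 : (0:ℝ) ≤ E w := apply_nonneg E w
    nlinarith
  have hTw : ‖T r‖ = ‖T w‖ := by
    have : T w = - T r := by simp [hw, map_sub, hv]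
    rw [this, norm_neg]
  have hr2 : κ * ‖r‖ ^ 2 ≤ CT * CK * (E v) ^ 2 := by
    have h1 := hbdry r hrRM
    have h2 := htrace w hwperp
    have h3 := hkorn2 w hwperp
    rw [hTw] at h1
    have h4 := mul_le_mul_of_nonneg_left h3 hCT.le
    have h5 := mul_le_mul_of_nonneg_left hEw2 (by positivity : (0:ℝ) ≤ CT * CK)
    nlinarith
  have hrnorm : ‖r‖ ^ 2 ≤ CT * CK / κ * (E v) ^ 2 := by
    rw [div_mul_eq_mul_div, le_div_iff₀ hκ]
    nlinarith
  have hs1w : (s1 w) ^ 2 ≤ CK * (E v) ^ 2 := by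
    have := hkorn2 w hwperp
    nlinarith
  have hs1r : (s1 r) ^ 2 ≤ CP * (CT * CK / κ * (E v) ^ 2) := by
    have := hfd r hrRM
    nlinarith
  have htri : s1 v ≤ s1 w + s1 r := by
    have : v = w + r := by simp [hw]
    calc s1 v = s1 (w + r) := by rw [← this]
    _ ≤ s1 w + s1 r := map_add_le_add s1 w r
  have h0w : (0:ℝ) ≤ s1 w := apply_nonneg s1 w
  have h0r : (0:ℝ) ≤ s1 r := apply_nonneg s1 r
  have h0v : (0:ℝ) ≤ s1 v := apply_nonneg s1 v
  nlinarith [sq_nonneg (s1 w - s1 r)]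
end

section
/- (Fictitious Space Lemma) Let Ṽ and V be finite-dimensional real inner product spaces, Π : Ṽ → V a surjective linear map, and B̃ : Ṽ' → Ṽ a symmetric positive definite operator. Then B := Π B̃ Π' : V' → V is symmetric positive definite, where Π' : V' → Ṽ' is the adjoint defined by ⟨Π'g, ṽ⟩ = ⟨g, Π ṽ⟩. Moreover, for every v ∈ V, ⟨B⁻¹v, v⟩ = inf { ⟨B̃⁻¹ṽ, ṽ⟩ : ṽ ∈ Ṽ, Π ṽ = v }. -/
/-- Fictitious Space Lemma: for a surjective `π : Ṽ → V` and an SPD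
`B̃ : Ṽ' → Ṽ`, the operator `B = π B̃ π'` is SPD, and
`⟨B⁻¹ v, v⟩ = inf { ⟨B̃⁻¹ ṽ, ṽ⟩ : π ṽ = v }`. -/
theorem stmt_7 {Vt V : Type*}
    [AddCommGroup Vt] [Module ℝ Vt] [FiniteDimensional ℝ Vt]
    [AddCommGroup V] [Module ℝ V] [FiniteDimensional ℝ V]
    (π : Vt →ₗ[ℝ] V) (hπ : Function.Surjective π)
    (Bt : Module.Dual ℝ Vt →ₗ[ℝ] Vt)
    (hBtsym : ∀ f g : Module.Dual ℝ Vt, g (Bt f) = f (Bt g))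
    (hBtpd : ∀ f : Module.Dual ℝ Vt, f ≠ 0 → 0 < f (Bt f)) :
    (∀ f g : Module.Dual ℝ V,
      g ((π ∘ₗ Bt ∘ₗ π.dualMap) f) = f ((π ∘ₗ Bt ∘ₗ π.dualMap) g)) ∧
    (∀ f : Module.Dual ℝ V, f ≠ 0 → 0 < f ((π ∘ₗ Bt ∘ₗ π.dualMap) f)) ∧
    (∀ (v : V) (f : Module.Dual ℝ V), (π ∘ₗ Bt ∘ₗ π.dualMap) f = v →
      IsGLB {t : ℝ | ∃ vt : Vt, π vt = v ∧ ∃ g : Module.Dual ℝ Vt,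
        Bt g = vt ∧ t = g vt} (f v)) := by
  have hnonneg : ∀ k : Module.Dual ℝ Vt, 0 ≤ k (Bt k) := by
    intro k
    by_cases hk : k = 0
    · simp [hk]
    · exact le_of_lt (hBtpd k hk)
  refine ⟨fun f g => hBtsym (π.dualMap f) (π.dualMap g), ?_, ?_⟩
  · intro f hf
    have h1 : π.dualMap f ≠ 0 :=
      fun h0 => hf (LinearMap.dualMap_injective_of_surjective hπ (by simpa using h0))
    exact hBtpd (π.dualMap f) h1
  · intro v f hf
    set h : Module.Dual ℝ Vt := π.dualMap f with hh
    have hv : f v = h (Bt h) := by rw [← hf]; rfl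
    have hπh : π (Bt h) = v := by rw [← hf]; rfl
    constructor
    · rintro t ⟨vt, hvt, g, hgvt, rfl⟩
      -- orthogonality: h (Bt (g - h)) = 0
      have horth : h (Bt (g - h)) = 0 := by
        have heq : h (Bt (g - h)) = f (π (Bt g) - π (Bt h)) := by
          simp [hh, map_sub]
        rw [heq, hgvt, hvt, hπh, sub_self, map_zero]
      have hexp : g (Bt g) = h (Bt h) + 2 * (h (Bt (g - h))) + (g - h) (Bt (g - h)) := by
        have hsym := hBtsym h (g - h)
        simp only [map_sub, LinearMap.sub_apply] at hsym ⊢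
        ring_nf
        linarith [hsym]
      rw [hv, ← hgvt, hexp, horth]
      have := hnonneg (g - h)
      linarith
    · intro t ht
      refine ht ⟨Bt h, hπh, h, rfl, hv.symm ▸ ?_⟩
      exact hv ▸ rfl
end

section
/- In the setting of the fictitious space lemma, the minimizer of ⟨B̃⁻¹ṽ, ṽ⟩ over { ṽ : Π ṽ = v } is ṽ* = B̃ Π' B⁻¹ v, and the correction is orthogonal: for every w̃ with Π w̃ = 0, ⟨B̃⁻¹ ṽ*, w̃⟩ = 0. -/
/-- In the fictitious space lemma, the minimizer of `⟨B̃⁻¹ṽ, ṽ⟩` over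
`{ṽ : π ṽ = v}` is `ṽ* = B̃ π' B⁻¹ v`, and for every `w̃` with `π w̃ = 0` one
has `⟨B̃⁻¹ ṽ*, w̃⟩ = 0`.  Here `f = B⁻¹ v`, so `B̃⁻¹ ṽ* = π' f`. -/
theorem stmt_8 {Vt V : Type*}
    [AddCommGroup Vt] [Module ℝ Vt] [FiniteDimensional ℝ Vt]
    [AddCommGroup V] [Module ℝ V] [FiniteDimensional ℝ V]
    (π : Vt →ₗ[ℝ] V) (hπ : Function.Surjective π)
    (Bt : Module.Dual ℝ Vt →ₗ[ℝ] Vt)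
    (hBtsym : ∀ f g : Module.Dual ℝ Vt, g (Bt f) = f (Bt g))
    (hBtpd : ∀ f : Module.Dual ℝ Vt, f ≠ 0 → 0 < f (Bt f))
    (v : V) (f : Module.Dual ℝ V) (hf : (π ∘ₗ Bt ∘ₗ π.dualMap) f = v) :
    π (Bt (π.dualMap f)) = v ∧
    (∀ (vt : Vt) (g : Module.Dual ℝ Vt), π vt = v → Bt g = vt →
      (π.dualMap f) (Bt (π.dualMap f)) ≤ g vt) ∧
    (∀ wt : Vt, π wt = 0 → (π.dualMap f) wt = 0) := by
  simp only [LinearMap.comp_apply] at hf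
  have hker : ∀ wt : Vt, π wt = 0 → (π.dualMap f) wt = 0 := by
    intro wt hwt
    simp [LinearMap.dualMap_apply, hwt]
  refine ⟨hf, ?_, hker⟩
  intro vt g hvt hg
  set fs := π.dualMap f with hfs
  -- fs vt = fs (Bt fs)
  have h1 : fs vt = fs (Bt fs) := by
    have : fs vt = f (π vt) := rfl
    rw [this, hvt, ← hf]; rfl
  set h := g - fs with hh
  have hnn : 0 ≤ h (Bt h) := by
    rcases eq_or_ne h 0 with h0 | h0
    · simp [h0]
    · exact le_of_lt (hBtpd h h0)
  have hcross : fs (Bt h) = 0 := by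
    have : fs (Bt h) = fs (Bt g) - fs (Bt fs) := by
      simp [hh, map_sub]
    rw [this, hg, ← h1]
    ring
  have hexp : g vt = fs (Bt fs) + h (Bt h) := by
    have hg2 : g = fs + h := by simp [hh]
    have : g (Bt g) = fs (Bt fs) + h (Bt h) := by
      rw [hg2]
      simp only [map_add, LinearMap.add_apply]
      have hsym : h (Bt fs) = fs (Bt h) := hBtsym fs h
      rw [hsym, hcross]
      ring
    rw [← this, hg]
  rw [hexp]
  linarith
end

section
/- Suppose a bilinear form a_h on a finite-dimensional space V_h satisfies a_h(v,v) ≥ 2ν‖ε(v)‖² + 2να|[v_t]|²_* − 4νC|v|_{1,h}|[v_t]|_*, and the discrete Korn inequality |v|²_{1,h} ≤ C_K(‖ε(v)‖² + |[v_t]|²_*) holds. Then there exists α₀ > 0 (depending only on C and C_K) such that for all α ≥ α₀ there is γ > 0 with a_h(v,v) ≥ γ (2ν|v|²_{1,h} + 2ν|[v_t]|²_*) for all v ∈ V_h. -/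
/-- Coercivity of `a_h` for large penalty: if
`a_h(v,v) ≥ 2ν‖ε(v)‖² + 2να|[v_t]|²_* − 4νC|v|_{1,h}|[v_t]|_*` and the
discrete Korn inequality `|v|²_{1,h} ≤ C_K(‖ε(v)‖² + |[v_t]|²_*)` holds, then
there is `α₀ > 0` such that for all `α ≥ α₀` there is `γ > 0` with
`a_h(v,v) ≥ γ ‖v‖²_{DG}` where `‖v‖²_{DG} = 2ν|v|²_{1,h} + 2ν|[v_t]|²_*`. -/
theorem stmt_11 {V : Type*} (x1 E J : V → ℝ)
    (hx1 : ∀ v, 0 ≤ x1 v) (hE : ∀ v, 0 ≤ E v) (hJ : ∀ v, 0 ≤ J v)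
    (ν C CK : ℝ) (hν : 0 < ν) (hC : 0 ≤ C) (hCK : 0 < CK)
    (a : ℝ → V → ℝ)
    (hlow : ∀ (α : ℝ) (v : V),
      a α v ≥ 2 * ν * (E v) ^ 2 + 2 * ν * α * (J v) ^ 2
        - 4 * ν * C * (x1 v) * (J v))
    (hkorn : ∀ v : V, (x1 v) ^ 2 ≤ CK * ((E v) ^ 2 + (J v) ^ 2)) :
    ∃ α₀ > 0, ∀ α ≥ α₀, ∃ γ > 0, ∀ v : V,
      a α v ≥ γ * (2 * ν * (x1 v) ^ 2 + 2 * ν * (J v) ^ 2) := by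
  refine ⟨1 + 2 * CK * C ^ 2, by positivity,
    fun α hα => ⟨1 / (4 * (CK + 1)), by positivity, fun v => ?_⟩⟩
  have h1 := hlow α v
  have h2 := hkorn v
  have hγ : (0:ℝ) < 4 * (CK + 1) := by positivity
  -- key scalar inequality
  have key : (E v) ^ 2 + α * (J v) ^ 2 - 2 * C * (x1 v) * (J v)
      ≥ (1 / (4 * (CK + 1))) * ((x1 v) ^ 2 + (J v) ^ 2) := by
    rw [ge_iff_le, div_mul_eq_mul_div, div_le_iff₀ hγ]
    have hamgm : 4 * CK * C * (x1 v) * (J v) ≤ (x1 v) ^ 2 + 4 * CK ^ 2 * C ^ 2 * (J v) ^ 2 := by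
      nlinarith [sq_nonneg (x1 v - 2 * CK * C * J v)]
    nlinarith [sq_nonneg (E v), sq_nonneg (J v), sq_nonneg (x1 v),
      mul_le_mul_of_nonneg_left h2 hCK.le,
      mul_nonneg (mul_nonneg hCK.le (sq_nonneg C)) (sq_nonneg (J v)),
      mul_le_mul_of_nonneg_right hα (sq_nonneg (J v))]
  calc a α v ≥ 2 * ν * (E v) ^ 2 + 2 * ν * α * (J v) ^ 2
        - 4 * ν * C * (x1 v) * (J v) := h1
    _ = 2 * ν * ((E v) ^ 2 + α * (J v) ^ 2 - 2 * C * (x1 v) * (J v)) := by ring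
    _ ≥ 2 * ν * ((1 / (4 * (CK + 1))) * ((x1 v) ^ 2 + (J v) ^ 2)) := by
        apply mul_le_mul_of_nonneg_left key (by positivity)
    _ = (1 / (4 * (CK + 1))) * (2 * ν * (x1 v) ^ 2 + 2 * ν * (J v) ^ 2) := by ring
end
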